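/- Let $\mathbb{F}$ be $\mathbb{R}$ or $\mathbb{C}$, let $A \in M_n(\mathbb{F})$, and let $S(A)$ be the similarity class of $A$. Then the map $\pi : GL_n(\mathbb{F}) \to S(A)$, $P \mapsto PAP^{-1}$, admits a local continuous cross-section around $A$: there is a neighborhood $U$ of $A$ in $S(A)$ and a continuous map $g : U \to GL_n(\mathbb{F})$ with $g(A) = I_n$ and $B = g(B) A g(B)^{-1}$ for all $B \in U$. -/

import Mathlib

open Matrix Submodule Module

set_option maxHeartbeats 1000000
set_option synthInstance.maxHeartbeats 100000

private lemma ringInverse_map_of_ringEquiv {R S : Type*} [Ring R] [Ring S] (e : R ≃+* S) (x : R) :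
    Ring.inverse (e x) = e (Ring.inverse x) := by
  by_cases h : IsUnit x
  · obtain ⟨u, rfl⟩ := h
    have h2 : Ring.inverse ((Units.map (e : R →* S) u : Sˣ) : S) =
        ((Units.map (e : R →* S) u)⁻¹ : Sˣ) := Ring.inverse_unit _
    have h3 : ((Units.map (e : R →* S) u : Sˣ) : S) = e u := rfl
    rw [Ring.inverse_unit, ← h3, h2]
    have h4 : ((Units.map (e : R →* S) u)⁻¹ : Sˣ) = Units.map (e : R →* S) u⁻¹ := by
      rw [← MonoidHom.map_inv]
    rw [h4]
    rfl
  · have h' : ¬ IsUnit (e x) := by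
      intro hu
      apply h
      have := hu.map e.symm.toMonoidHom
      simpa using this
    rw [Ring.inverse_non_unit _ h, Ring.inverse_non_unit _ h', map_zero]

/-- For `𝕜 = ℝ` or `ℂ` and `A` an `n × n` matrix, the conjugation map
`P ↦ P A P⁻¹` from `GLₙ(𝕜)` onto the similarity class `S(A)` of `A` admits a continuous
local cross-section `g` around `A`, with `g A = 1`. -/
theorem stmt9 {𝕜 : Type} [RCLike 𝕜] (n : ℕ) (A : Matrix (Fin n) (Fin n) 𝕜) :
    ∃ U : Set (Matrix (Fin n) (Fin n) 𝕜),
      ∃ g : Matrix (Fin n) (Fin n) 𝕜 → Matrix (Fin n) (Fin n) 𝕜,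
        U ⊆ {B | ∃ P : Matrix (Fin n) (Fin n) 𝕜, IsUnit P ∧ B = P * A * P⁻¹} ∧
        U ∈ nhdsWithin A {B | ∃ P : Matrix (Fin n) (Fin n) 𝕜, IsUnit P ∧ B = P * A * P⁻¹} ∧
        ContinuousOn g U ∧ g A = 1 ∧
        ∀ B ∈ U, IsUnit (g B) ∧ B = g B * A * (g B)⁻¹ := by
  classical
  set orb : Set (Matrix (Fin n) (Fin n) 𝕜) :=
    {B | ∃ P : Matrix (Fin n) (Fin n) 𝕜, IsUnit P ∧ B = P * A * P⁻¹} with horb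
  -- The Sylvester-type operator `Φ B : X ↦ B X - X A` and `S := Φ A = ad A`.
  set Φ : Matrix (Fin n) (Fin n) 𝕜 → Module.End 𝕜 (Matrix (Fin n) (Fin n) 𝕜) :=
    fun B => LinearMap.mulLeft 𝕜 B - LinearMap.mulRight 𝕜 A with hΦ
  have hΦapp : ∀ B X, Φ B X = B * X - X * A := fun B X => rfl
  set S : Module.End 𝕜 (Matrix (Fin n) (Fin n) 𝕜) := Φ A with hS
  set K : Submodule 𝕜 (Matrix (Fin n) (Fin n) 𝕜) := LinearMap.ker S with hK
  obtain ⟨K', hKc⟩ := K.exists_isCompl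
  set Rg : Submodule 𝕜 (Matrix (Fin n) (Fin n) 𝕜) := LinearMap.range S with hRg
  obtain ⟨C, hCc⟩ := Rg.exists_isCompl
  have hone_mem : (1 : Matrix (Fin n) (Fin n) 𝕜) ∈ K := by
    simp [hK, LinearMap.mem_ker, hS, hΦapp]
  have hdim : finrank 𝕜 Rg = finrank 𝕜 K' := by
    have h1 := LinearMap.finrank_range_add_finrank_ker S
    rw [← hK, ← hRg] at h1
    have h2 := Submodule.finrank_add_eq_of_isCompl hKc
    omega
  let e : Rg ≃ₗ[𝕜] K' := (FiniteDimensional.nonempty_linearEquiv_of_finrank_eq hdim).some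
  set ψ : Module.End 𝕜 (Matrix (Fin n) (Fin n) 𝕜) :=
    K'.subtype ∘ₗ e.toLinearMap ∘ₗ (Rg.projectionOnto C hCc) with hψ
  set Pr : Module.End 𝕜 (Matrix (Fin n) (Fin n) 𝕜) :=
    K.subtype ∘ₗ (K.projectionOnto K' hKc) with hPr
  set T : Matrix (Fin n) (Fin n) 𝕜 → Module.End 𝕜 (Matrix (Fin n) (Fin n) 𝕜) :=
    fun B => ψ ∘ₗ Φ B + Pr with hT
  have hTapp : ∀ B X, T B X = ψ (Φ B X) + Pr X := fun B X => rfl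
  -- basic properties of ψ and Pr
  have hψ_mem : ∀ X, ψ X ∈ K' := fun X => (e ((Rg.projectionOnto C hCc) X)).2
  have hψ_inj : ∀ v ∈ Rg, ψ v = 0 → v = 0 := by
    intro v hv h0
    have h1 : (Rg.projectionOnto C hCc) v = ⟨v, hv⟩ :=
      Submodule.projectionOnto_apply_left hCc ⟨v, hv⟩
    have h2 : ψ v = (e ⟨v, hv⟩ : Matrix (Fin n) (Fin n) 𝕜) := by
      simp [hψ, h1]
    rw [h2] at h0
    have h3 : e ⟨v, hv⟩ = 0 := Subtype.ext h0
    have h4 : (⟨v, hv⟩ : Rg) = 0 := by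
      rwa [LinearEquiv.map_eq_zero_iff] at h3
    exact Subtype.ext_iff.1 h4
  have hPr_mem : ∀ X, Pr X ∈ K := fun X => ((K.projectionOnto K' hKc) X).2
  have hPr_id : ∀ X ∈ K, Pr X = X := by
    intro X hX
    have h := Submodule.projectionOnto_apply_left hKc ⟨X, hX⟩
    simp only [hPr, LinearMap.coe_comp, Function.comp_apply, Submodule.coe_subtype]
    rw [h]
  have hPr_ker : ∀ X, Pr X = 0 → X ∈ K' := by
    intro X h0
    have h1 : K.subtype ((K.projectionOnto K' hKc) X) = K.subtype 0 := by
      simpa [hPr] using h0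
    have h2 : (K.projectionOnto K' hKc) X = 0 := K.injective_subtype h1
    exact (Submodule.projectionOnto_apply_eq_zero_iff hKc).1 h2
  have hdisj : ∀ v, v ∈ K → v ∈ K' → v = 0 := by
    intro v h1 h2
    have := hKc.disjoint
    rw [Submodule.disjoint_def] at this
    exact this v h1 h2
  -- `T A` is bijective and fixes `1`.
  have hS1 : S (1 : Matrix (Fin n) (Fin n) 𝕜) = 0 := hone_mem
  have hTA1 : T A (1 : Matrix (Fin n) (Fin n) 𝕜) = 1 := by
    rw [hTapp, hS1, map_zero, zero_add, hPr_id _ hone_mem]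
  have hTAinj : ∀ x, T A x = 0 → x = 0 := by
    intro x hx
    rw [hTapp] at hx
    have hmem : ψ (S x) = - Pr x := eq_neg_of_add_eq_zero_left hx
    have hKmem : ψ (S x) ∈ K := hmem ▸ neg_mem (hPr_mem x)
    have h0 : ψ (S x) = 0 := hdisj _ hKmem (hψ_mem _)
    have hSx : S x = 0 := hψ_inj _ ⟨x, rfl⟩ h0
    have hPx : Pr x = 0 := by rw [h0] at hmem; simpa using hmem.symm
    exact hdisj x hSx (hPr_ker x hPx)
  have hTAunit : IsUnit (T A) := by
    rw [Module.End.isUnit_iff]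
    have hinj : Function.Injective (T A) := by
      rw [← LinearMap.ker_eq_bot]
      apply LinearMap.ker_eq_bot'.2
      intro x hx
      exact hTAinj x hx
    exact ⟨hinj, LinearMap.injective_iff_surjective.1 hinj⟩
  -- matrix realization
  set b : Basis (Fin n × Fin n) 𝕜 (Matrix (Fin n) (Fin n) 𝕜) := Matrix.stdBasis 𝕜 (Fin n) (Fin n)
    with hb
  set toMat := LinearMap.toMatrixAlgEquiv b with htoMat
  set M : Matrix (Fin n) (Fin n) 𝕜 → Matrix (Fin n × Fin n) (Fin n × Fin n) 𝕜 :=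
    fun B => toMat (T B) with hM
  have hMunit : ∀ B, IsUnit (M B) ↔ IsUnit (T B) := by
    intro B
    constructor
    · intro h
      have h2 := h.map toMat.symm.toRingEquiv.toMonoidHom
      have h3 : toMat.symm.toRingEquiv.toMonoidHom (M B) = T B := by
        show toMat.symm (toMat (T B)) = T B
        simp
      rwa [h3] at h2
    · intro h
      exact h.map toMat.toRingEquiv.toMonoidHom
  -- continuity of `M`
  have hMcont : Continuous M := by
    have hMsplit : M = fun B => toMat (ψ ∘ₗ LinearMap.mulLeft 𝕜 B) +
        toMat (Pr - ψ ∘ₗ LinearMap.mulRight 𝕜 A) := by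
      funext B
      have hTB : T B = ψ ∘ₗ LinearMap.mulLeft 𝕜 B + (Pr - ψ ∘ₗ LinearMap.mulRight 𝕜 A) := by
        apply LinearMap.ext
        intro X
        simp only [hTapp, hΦapp, LinearMap.add_apply, LinearMap.sub_apply, LinearMap.coe_comp,
          Function.comp_apply, LinearMap.mulLeft_apply, LinearMap.mulRight_apply, map_sub]
        abel
      show toMat (T B) = _
      rw [hTB, map_add]
    rw [hMsplit]
    have hlin : IsLinearMap 𝕜 (fun B : Matrix (Fin n) (Fin n) 𝕜 =>
        toMat (ψ ∘ₗ LinearMap.mulLeft 𝕜 B)) := by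
      constructor
      · intro B B'
        have h5 : ψ ∘ₗ LinearMap.mulLeft 𝕜 (B + B') =
            ψ ∘ₗ LinearMap.mulLeft 𝕜 B + ψ ∘ₗ LinearMap.mulLeft 𝕜 B' := by
          apply LinearMap.ext
          intro X
          simp [LinearMap.mulLeft_apply, add_mul]
        rw [h5, map_add]
      · intro c B
        have h5 : ψ ∘ₗ LinearMap.mulLeft 𝕜 (c • B) = c • (ψ ∘ₗ LinearMap.mulLeft 𝕜 B) := by
          apply LinearMap.ext
          intro X
          simp [LinearMap.mulLeft_apply, smul_mul_assoc]
        rw [h5, _root_.map_smul]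
    exact ((hlin.mk' _).continuous_of_finiteDimensional).add continuous_const
  -- the candidate section
  set g : Matrix (Fin n) (Fin n) 𝕜 → Matrix (Fin n) (Fin n) 𝕜 :=
    fun B => b.equivFun.symm ((M B)⁻¹ *ᵥ b.equivFun 1) with hg
  -- continuity of `g` where `M B` is invertible
  have hgcont : ∀ B, IsUnit (M B) → ContinuousAt g B := by
    intro B hu
    have hdet : (M B).det ≠ 0 := by
      intro h0
      rw [Matrix.isUnit_iff_isUnit_det, h0] at hu
      exact hu.ne_zero rfl
    have hinv : ContinuousAt Inv.inv (M B) := by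
      apply continuousAt_matrix_inv
      rw [Ring.inverse_eq_inv']
      exact continuousAt_inv₀ hdet
    have h1 : ContinuousAt (fun B' => (M B')⁻¹) B := hinv.comp hMcont.continuousAt
    have h2 : ContinuousAt (fun B' => (M B')⁻¹ *ᵥ b.equivFun 1) B := by
      have : Continuous (fun N : Matrix (Fin n × Fin n) (Fin n × Fin n) 𝕜 =>
          N *ᵥ b.equivFun 1) := by
        exact continuous_id.matrix_mulVec continuous_const
      exact this.continuousAt.comp h1
    have h3 : Continuous (b.equivFun.symm : ((Fin n × Fin n) → 𝕜) →
        Matrix (Fin n) (Fin n) 𝕜) :=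
      LinearMap.continuous_of_finiteDimensional _
    exact h3.continuousAt.comp h2
  -- where `T B` is invertible, `g B` is the preimage of `1` under `T B`
  have hgTB : ∀ B, IsUnit (T B) → T B (g B) = 1 := by
    intro B hu
    have hMu : IsUnit (M B) := (hMunit B).2 hu
    have h1 : (M B)⁻¹ = toMat (Ring.inverse (T B)) := by
      have ha : (M B)⁻¹ = Ring.inverse (M B) := Matrix.nonsing_inv_eq_ringInverse _
      rw [ha]
      have hb2 : Ring.inverse (toMat.toRingEquiv (T B)) =
          toMat.toRingEquiv (Ring.inverse (T B)) :=
        ringInverse_map_of_ringEquiv toMat.toRingEquiv (T B)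
      exact hb2
    have h2 : g B = (Ring.inverse (T B)) 1 := by
      rw [hg]
      simp only []
      rw [h1]
      have key : toMat (Ring.inverse (T B)) *ᵥ ⇑(b.repr 1) = ⇑(b.repr ((Ring.inverse (T B)) 1)) :=
        LinearMap.toMatrix_mulVec_repr b b (Ring.inverse (T B)) 1
      have hfun : ⇑(b.equivFun) = fun x => ⇑(b.repr x) := by
        funext x
        exact Basis.equivFun_apply b x
      rw [hfun]
      rw [key]
      have : b.equivFun ((Ring.inverse (T B)) 1) = ⇑(b.repr ((Ring.inverse (T B)) 1)) :=
        Basis.equivFun_apply b _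
      rw [← this, LinearEquiv.symm_apply_apply]
    rw [h2]
    have : T B ((Ring.inverse (T B)) 1) = (T B * Ring.inverse (T B)) 1 := rfl
    rw [this, Ring.mul_inverse_cancel _ hu]
    rfl
  -- `g A = 1`
  have hgA : g A = 1 := by
    have h1 : T A (g A) = 1 := hgTB A hTAunit
    have h2 : T A (g A) = T A 1 := by rw [h1, hTA1]
    have hinj : Function.Injective (T A) := (Module.End.isUnit_iff _).1 hTAunit |>.1
    exact hinj h2
  -- the linear-independence openness condition
  set r : ℕ := finrank 𝕜 K' with hr
  set u : Basis (Fin r) 𝕜 K' := Module.finBasis 𝕜 K' with hu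
  set w : Fin r → Matrix (Fin n) (Fin n) 𝕜 := fun i => (u i : Matrix (Fin n) (Fin n) 𝕜) with hw
  set Fam : Matrix (Fin n) (Fin n) 𝕜 → (Fin r → ((Fin n × Fin n) → 𝕜)) :=
    fun B => fun i => b.equivFun (ψ (Φ B (w i))) with hFam
  have hFamcont : Continuous Fam := by
    apply continuous_pi
    intro i
    have h1 : Continuous (fun B : Matrix (Fin n) (Fin n) 𝕜 => B * w i - w i * A) :=
      (continuous_id.matrix_mul continuous_const).sub continuous_const
    have h2 : Continuous (fun X : Matrix (Fin n) (Fin n) 𝕜 => b.equivFun (ψ X)) := by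
      exact LinearMap.continuous_of_finiteDimensional
        (b.equivFun.toLinearMap ∘ₗ ψ)
    have : (fun B => b.equivFun (ψ (Φ B (w i)))) =
        (fun X : Matrix (Fin n) (Fin n) 𝕜 => b.equivFun (ψ X)) ∘
        (fun B : Matrix (Fin n) (Fin n) 𝕜 => B * w i - w i * A) := by
      funext B
      simp [hΦapp]
    rw [this]
    exact h2.comp h1
  set LIset : Set (Matrix (Fin n) (Fin n) 𝕜) :=
    Fam ⁻¹' {f : Fin r → ((Fin n × Fin n) → 𝕜) | LinearIndependent 𝕜 f} with hLIset
  have hLIopen : IsOpen LIset := isOpen_setOf_linearIndependent.preimage hFamcont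
  have hA_LI : A ∈ LIset := by
    -- the family `ψ (S (w i))` is linearly independent
    have hwLI : LinearIndependent 𝕜 w := by
      have := u.linearIndependent
      exact this.map' K'.subtype K'.ker_subtype
    have hLI2 : LinearIndependent 𝕜 (fun i => ψ (S (w i))) := by
      have hdisj2 : Disjoint (span 𝕜 (Set.range w)) (LinearMap.ker (ψ ∘ₗ S)) := by
        have hspan : span 𝕜 (Set.range w) ≤ K' := by
          rw [span_le]
          rintro - ⟨i, rfl⟩
          exact (u i).2
        rw [disjoint_def]
        intro x hx hker
        have hxK' : x ∈ K' := hspan hx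
        rw [LinearMap.mem_ker] at hker
        have hSx : S x = 0 := hψ_inj _ ⟨x, rfl⟩ hker
        exact hdisj x hSx hxK'
      have := hwLI.map (f := ψ ∘ₗ S) hdisj2
      exact this
    have hLI3 : LinearIndependent 𝕜 (fun i => b.equivFun (ψ (S (w i)))) := by
      have := hLI2.map' b.equivFun.toLinearMap b.equivFun.ker
      exact this
    simpa [hLIset, hFam, hS] using hLI3
  -- on the orbit, within `LIset`, we have `ker (ψ ∘ Φ B) = ker (Φ B)`
  have hkerEq : ∀ B ∈ orb, B ∈ LIset → LinearMap.ker (ψ ∘ₗ Φ B) = LinearMap.ker (Φ B) := by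
    intro B hBorb hBLI
    obtain ⟨P, hP, hBP⟩ := hBorb
    have hPdet : IsUnit P.det := (Matrix.isUnit_iff_isUnit_det P).1 hP
    have hPP : P * P⁻¹ = 1 := Matrix.mul_nonsing_inv P hPdet
    have hPP' : P⁻¹ * P = 1 := Matrix.nonsing_inv_mul P hPdet
    -- `ker (Φ B)` has the same dimension as `K`
    have hkerB : finrank 𝕜 (LinearMap.ker (Φ B)) = finrank 𝕜 K := by
      let EP : Matrix (Fin n) (Fin n) 𝕜 ≃ₗ[𝕜] Matrix (Fin n) (Fin n) 𝕜 :=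
        LinearEquiv.ofLinear (LinearMap.mulLeft 𝕜 P) (LinearMap.mulLeft 𝕜 P⁻¹)
          (by ext X; simp [LinearMap.mulLeft_apply, ← Matrix.mul_assoc, hPP])
          (by ext X; simp [LinearMap.mulLeft_apply, ← Matrix.mul_assoc, hPP'])
      have hkermap : LinearMap.ker (Φ B) = Submodule.map (EP : Matrix (Fin n) (Fin n) 𝕜 →ₗ[𝕜] Matrix (Fin n) (Fin n) 𝕜) K := by
        ext X
        constructor
        · intro hX
          rw [LinearMap.mem_ker, hΦapp] at hX
          refine ⟨P⁻¹ * X, ?_, ?_⟩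
          · simp only [SetLike.mem_coe, hK, LinearMap.mem_ker, hS, hΦapp]
            have hBX : B * X = X * A := sub_eq_zero.mp hX
            have hAX : A * (P⁻¹ * X) = P⁻¹ * X * A := by
              have h1 : P⁻¹ * (B * X) = P⁻¹ * (X * A) := by rw [hBX]
              rw [hBP] at h1
              calc A * (P⁻¹ * X) = (P⁻¹ * P) * A * P⁻¹ * X := by
                    rw [hPP']; noncomm_ring
                _ = P⁻¹ * (P * A * P⁻¹ * X) := by noncomm_ring
                _ = P⁻¹ * (X * A) := h1
                _ = P⁻¹ * X * A := by noncomm_ring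
            rw [hAX]
            exact sub_self _
          · show P * (P⁻¹ * X) = X
            rw [← Matrix.mul_assoc, hPP, Matrix.one_mul]
        · rintro ⟨Y, hY, rfl⟩
          simp only [SetLike.mem_coe, hK, LinearMap.mem_ker, hS, hΦapp] at hY
          have hAY : A * Y = Y * A := sub_eq_zero.mp hY
          show Φ B (P * Y) = 0
          rw [hΦapp, hBP]
          calc P * A * P⁻¹ * (P * Y) - P * Y * A
              = P * A * (P⁻¹ * P) * Y - P * (Y * A) := by noncomm_ring
            _ = P * (A * Y) - P * (Y * A) := by rw [hPP']; noncomm_ring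
            _ = 0 := by rw [hAY]; noncomm_ring
      rw [hkermap]
      exact LinearEquiv.finrank_map_eq EP K
    -- the rank of `ψ ∘ Φ B` is at least `r`
    have hrank : r ≤ finrank 𝕜 (LinearMap.range (ψ ∘ₗ Φ B)) := by
      have hLI : LinearIndependent 𝕜 (fun i => ψ (Φ B (w i))) := by
        have : LinearIndependent 𝕜 (fun i => b.equivFun (ψ (Φ B (w i)))) := hBLI
        exact LinearIndependent.of_comp b.equivFun.toLinearMap this
      have hspanle : span 𝕜 (Set.range (fun i => ψ (Φ B (w i)))) ≤
          LinearMap.range (ψ ∘ₗ Φ B) := by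
        rw [span_le]
        rintro - ⟨i, rfl⟩
        exact ⟨w i, rfl⟩
      have := finrank_span_eq_card hLI
      calc r = Fintype.card (Fin r) := by simp
        _ = finrank 𝕜 (span 𝕜 (Set.range (fun i => ψ (Φ B (w i))))) := this.symm
        _ ≤ finrank 𝕜 (LinearMap.range (ψ ∘ₗ Φ B)) := Submodule.finrank_mono hspanle
    -- conclude by dimension count
    have hle : LinearMap.ker (Φ B) ≤ LinearMap.ker (ψ ∘ₗ Φ B) := by
      intro x hx
      rw [LinearMap.mem_ker] at hx ⊢
      rw [LinearMap.comp_apply, hx, map_zero]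
    refine (Submodule.eq_of_le_of_finrank_le hle ?_).symm
    have e1 := LinearMap.finrank_range_add_finrank_ker (ψ ∘ₗ Φ B)
    have e2 := LinearMap.finrank_range_add_finrank_ker S
    have e3 := Submodule.finrank_add_eq_of_isCompl hKc
    rw [hkerB]
    omega
  -- assemble the neighborhood
  set W1 : Set (Matrix (Fin n) (Fin n) 𝕜) := {B | IsUnit (M B)} with hW1
  have hW1open : IsOpen W1 := by
    have hcont : Continuous fun B => (M B).det := hMcont.matrix_det
    have hset : W1 = (fun B => (M B).det) ⁻¹' {x : 𝕜 | x ≠ 0} := by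
      ext B
      simp [hW1, Matrix.isUnit_iff_isUnit_det, isUnit_iff_ne_zero]
    rw [hset]
    exact isOpen_ne.preimage hcont
  set unitSet : Set (Matrix (Fin n) (Fin n) 𝕜) := {X | IsUnit X} with hunitSet
  have hUnitOpen : IsOpen unitSet := by
    have hcont : Continuous fun X : Matrix (Fin n) (Fin n) 𝕜 => X.det :=
      continuous_id.matrix_det
    have hset : unitSet = (fun X : Matrix (Fin n) (Fin n) 𝕜 => X.det) ⁻¹' {x : 𝕜 | x ≠ 0} := by
      ext X
      simp [hunitSet, Matrix.isUnit_iff_isUnit_det, isUnit_iff_ne_zero]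
    rw [hset]
    exact isOpen_ne.preimage hcont
  have hgW1 : ContinuousOn g W1 := fun B hB => (hgcont B hB).continuousWithinAt
  set W2 : Set (Matrix (Fin n) (Fin n) 𝕜) := W1 ∩ g ⁻¹' unitSet with hW2
  have hW2open : IsOpen W2 := hgW1.isOpen_inter_preimage hW1open hUnitOpen
  set W : Set (Matrix (Fin n) (Fin n) 𝕜) := W2 ∩ LIset with hWdef
  have hWopen : IsOpen W := hW2open.inter hLIopen
  have hMA : IsUnit (M A) := (hMunit A).2 hTAunit
  have hAW : A ∈ W := by
    refine ⟨⟨hMA, ?_⟩, hA_LI⟩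
    show g A ∈ unitSet
    rw [hgA]
    exact isUnit_one
  refine ⟨orb ∩ W, g, ?_, ?_, ?_, hgA, ?_⟩
  · exact Set.inter_subset_left
  · exact Filter.inter_mem self_mem_nhdsWithin
      (mem_nhdsWithin_of_mem_nhds (hWopen.mem_nhds hAW))
  · exact (hgW1.mono (fun B hB => hB.2.1.1)).mono (le_refl _)
  · rintro B ⟨hBorb, ⟨hBW1, hBg⟩, hBLI⟩
    have hgu : IsUnit (g B) := hBg
    refine ⟨hgu, ?_⟩
    have hTu : IsUnit (T B) := (hMunit B).1 hBW1
    have h1 : T B (g B) = 1 := hgTB B hTu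
    rw [hTapp] at h1
    have hmem : ψ (Φ B (g B)) = 1 - Pr (g B) := eq_sub_of_add_eq h1
    have hKmem : ψ (Φ B (g B)) ∈ K := hmem ▸ sub_mem hone_mem (hPr_mem _)
    have h0 : ψ (Φ B (g B)) = 0 := hdisj _ hKmem (hψ_mem _)
    have hker : g B ∈ LinearMap.ker (ψ ∘ₗ Φ B) := by
      rw [LinearMap.mem_ker, LinearMap.comp_apply]
      exact h0
    rw [hkerEq B hBorb hBLI] at hker
    have hΦ0 : Φ B (g B) = 0 := LinearMap.mem_ker.mp hker
    rw [hΦapp] at hΦ0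
    have hBg2 : B * g B = g B * A := sub_eq_zero.mp hΦ0
    have hdet : IsUnit (g B).det := (Matrix.isUnit_iff_isUnit_det _).1 hgu
    have hinv : g B * (g B)⁻¹ = 1 := Matrix.mul_nonsing_inv _ hdet
    calc B = B * (g B * (g B)⁻¹) := by rw [hinv, Matrix.mul_one]
      _ = (B * g B) * (g B)⁻¹ := by rw [Matrix.mul_assoc]
      _ = (g B * A) * (g B)⁻¹ := by rw [hBg2]
      _ = g B * A * (g B)⁻¹ := rfl
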